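/- For every n ≥ 3, the cycle graph C_n on n vertices (vertices {1,…,n} with i adjacent to j if and only if i and j differ by 1 modulo n) is an SPN graph. -/

import Mathlib

open Matrix Finset


/-- A real symmetric matrix `A` is *copositive* if `xᵀAx ≥ 0` for every
entrywise nonnegative vector `x`. -/
def Copositive {ι : Type*} [Fintype ι] (A : Matrix ι ι ℝ) : Prop :=
  ∀ x : ι → ℝ, (∀ i, 0 ≤ x i) → 0 ≤ x ⬝ᵥ A.mulVec x

/-- A real symmetric matrix is *SPN* if it is the sum of a positive semidefinite
matrix and a symmetric entrywise nonnegative matrix. -/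
def IsSPN {ι : Type*} [Fintype ι] (A : Matrix ι ι ℝ) : Prop :=
  ∃ P N : Matrix ι ι ℝ, P.PosSemidef ∧ N.IsSymm ∧ (∀ i j, 0 ≤ N i j) ∧ A = P + N

/-- The graph `G(A)` of a symmetric real matrix: `i ≠ j` are adjacent iff `A i j ≠ 0`. -/
def matrixGraph {ι : Type*} (A : Matrix ι ι ℝ) : SimpleGraph ι where
  Adj i j := i ≠ j ∧ (A i j ≠ 0 ∨ A j i ≠ 0)
  symm := by
    constructor
    intro i j h
    exact ⟨h.1.symm, h.2.symm⟩
  loopless := by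
    constructor
    intro i h
    exact h.1 rfl

/-- A graph `G` is an *SPN graph* if every copositive symmetric real matrix whose graph
is isomorphic to `G` is SPN. -/
def IsSPNGraph {V : Type*} [Fintype V] (G : SimpleGraph V) : Prop :=
  ∀ (n : ℕ) (A : Matrix (Fin n) (Fin n) ℝ), A.IsSymm → Copositive A →
    Nonempty (matrixGraph A ≃g G) → IsSPN A

/-- The cycle graph on `Fin n`: `i` and `j` are adjacent iff they differ by `1`
modulo `n`. -/
def cycleGraph (n : ℕ) : SimpleGraph (Fin n) where
  Adj i j := i ≠ j ∧ ((i.val + 1) % n = j.val ∨ (j.val + 1) % n = i.val)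
  symm := by
    constructor
    intro i j h
    exact ⟨h.1.symm, h.2.symm⟩
  loopless := by
    constructor
    intro i h
    exact h.1 rfl



section Helpers
set_option linter.unusedSectionVars false
variable {ι κ : Type*} [Fintype ι] [DecidableEq ι] [Fintype κ] [DecidableEq κ]

lemma qf_expand (A : Matrix ι ι ℝ) (x : ι → ℝ) :
    x ⬝ᵥ A *ᵥ x = ∑ i, ∑ j, x i * (A i j * x j) := by
  simp [dotProduct, mulVec, Finset.mul_sum]

lemma dot_symm {A : Matrix ι ι ℝ} (hs : A.IsSymm) (v w : ι → ℝ) :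
    v ⬝ᵥ A *ᵥ w = w ⬝ᵥ A *ᵥ v := by
  simp only [dotProduct, mulVec, Finset.mul_sum]
  rw [Finset.sum_comm]
  refine Finset.sum_congr rfl fun i _ => Finset.sum_congr rfl fun j _ => ?_
  rw [hs.apply i j]; ring

lemma isHermitian_of_isSymm {A : Matrix ι ι ℝ} (hs : A.IsSymm) : A.IsHermitian := by
  rwa [IsHermitian, conjTranspose_eq_transpose_of_trivial]

lemma nonpos_offdiag_psd {A : Matrix ι ι ℝ} (hs : A.IsSymm) (hc : Copositive A)
    (hod : ∀ i j, i ≠ j → A i j ≤ 0) : A.PosSemidef := by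
  refine .of_dotProduct_mulVec_nonneg (isHermitian_of_isSymm hs) fun x => ?_
  simp only [star_trivial]
  have h1 : (fun i => |x i|) ⬝ᵥ A *ᵥ (fun i => |x i|) ≤ x ⬝ᵥ A *ᵥ x := by
    rw [qf_expand, qf_expand]
    refine Finset.sum_le_sum fun i _ => Finset.sum_le_sum fun j _ => ?_
    rcases eq_or_ne i j with rfl | hij
    · exact le_of_eq (by rw [mul_left_comm]; rw [mul_left_comm (x i)]; rw [abs_mul_abs_self])
    · have : |x i| * (A i j * |x j|) = A i j * |x i * x j| := by rw [abs_mul]; ring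
      rw [this, show x i * (A i j * x j) = A i j * (x i * x j) by ring]
      exact mul_le_mul_of_nonpos_left (le_abs_self _) (hod i j hij)
  exact le_trans (hc _ fun i => abs_nonneg _) h1

lemma master_psd {A : Matrix ι ι ℝ} (hs : A.IsSymm) (hc : Copositive A)
    (z : ι → ℝ) (hz : ∀ i, 0 ≤ z i) (hker : A *ᵥ z = 0) (i0 : ι)
    (hpos : ∀ i, i ≠ i0 → 0 < z i) : A.PosSemidef := by
  refine .of_dotProduct_mulVec_nonneg (isHermitian_of_isSymm hs) fun x => ?_
  simp only [star_trivial]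
  have key : ∀ y : ι → ℝ, 0 ≤ y i0 → 0 ≤ y ⬝ᵥ A *ᵥ y := by
    intro y hy0
    have hne : (Finset.univ : Finset ι).Nonempty := ⟨i0, mem_univ _⟩
    set s : ℝ := Finset.univ.sup' hne (fun i => if i = i0 then 0 else |y i| / z i) with hsdef
    have hs0 : 0 ≤ s := by
      refine le_trans (le_of_eq ?_) (Finset.le_sup' _ (mem_univ i0))
      simp
    have hys : ∀ i, 0 ≤ y i + s * z i := by
      intro i
      rcases eq_or_ne i i0 with rfl | hi
      · have : 0 ≤ s * z i := mul_nonneg hs0 (hz i)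
        linarith
      · have hzi : 0 < z i := hpos i hi
        have h1 : |y i| / z i ≤ s := by
          refine le_trans (le_of_eq ?_) (Finset.le_sup' _ (mem_univ i))
          simp [hi]
        have h2 : |y i| ≤ s * z i := by
          rw [div_le_iff₀ hzi] at h1; linarith
        have := neg_abs_le (y i)
        linarith
    have h0 := hc (y + s • z) hys
    have hexp : (y + s • z) ⬝ᵥ A *ᵥ (y + s • z) = y ⬝ᵥ A *ᵥ y := by
      rw [Matrix.mulVec_add, Matrix.mulVec_smul, hker, smul_zero, add_zero,
        add_dotProduct, smul_dotProduct, dot_symm hs z y, hker]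
      simp
    rwa [hexp] at h0
  rcases le_total 0 (x i0) with h | h
  · exact key x h
  · have h2 := key (-x) (by simpa using h)
    have e : (-x) ⬝ᵥ A *ᵥ (-x) = x ⬝ᵥ A *ᵥ x := by
      simp [Matrix.mulVec_neg, dotProduct_neg, neg_dotProduct]
    linarith

lemma qf_continuous (M : Matrix ι ι ℝ) : Continuous fun x : ι → ℝ => x ⬝ᵥ M *ᵥ x := by
  have : (fun x : ι → ℝ => x ⬝ᵥ M *ᵥ x) = fun x => ∑ i, ∑ j, x i * (M i j * x j) :=
    funext fun x => qf_expand M x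
  rw [this]
  exact continuous_finset_sum _ fun i _ => continuous_finset_sum _ fun j _ =>
    (continuous_apply i).mul (continuous_const.mul (continuous_apply j))

lemma mulVec_apply_continuous (M : Matrix ι ι ℝ) (i : ι) :
    Continuous fun x : ι → ℝ => (M *ᵥ x) i := by
  have : (fun x : ι → ℝ => (M *ᵥ x) i) = fun x => ∑ j, M i j * x j := by
    funext x; simp [mulVec, dotProduct]
  rw [this]
  exact continuous_finset_sum _ fun j _ => continuous_const.mul (continuous_apply j)

lemma stdSimplex_nonempty [Nonempty ι] : (stdSimplex ℝ ι).Nonempty := by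
  obtain ⟨i0⟩ := ‹Nonempty ι›
  refine ⟨fun i => if i = i0 then 1 else 0, fun i => by positivity, ?_⟩
  simp

lemma stdSimplex_coord_le_one {x : ι → ℝ} (hx : x ∈ stdSimplex ℝ ι) (i : ι) : x i ≤ 1 := by
  have h1 : x i ≤ ∑ j, x j := Finset.single_le_sum (fun j _ => hx.1 j) (mem_univ i)
  rw [hx.2] at h1; exact h1

lemma min_multiplier {M : Matrix ι ι ℝ} (hsym : M.IsSymm) {x : ι → ℝ}
    (hmem : x ∈ stdSimplex ℝ ι) (hpos : ∀ i, 0 < x i)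
    (hmin : ∀ y ∈ stdSimplex ℝ ι, x ⬝ᵥ M *ᵥ x ≤ y ⬝ᵥ M *ᵥ y) :
    ∀ i j, (M *ᵥ x) i = (M *ᵥ x) j := by
  intro i j
  rcases eq_or_ne i j with rfl | hij
  · rfl
  set d : ι → ℝ := fun k => (if k = i then (1:ℝ) else 0) + (if k = j then (-1:ℝ) else 0)
    with hd
  have hdsum : ∑ k, d k = 0 := by
    simp only [hd, Finset.sum_add_distrib, Finset.sum_ite_eq', mem_univ, if_pos]
    norm_num
  have hdM : d ⬝ᵥ M *ᵥ x = (M *ᵥ x) i - (M *ᵥ x) j := by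
    simp only [dotProduct, hd, add_mul, ite_mul, one_mul, zero_mul, neg_one_mul,
      Finset.sum_add_distrib, Finset.sum_ite_eq', mem_univ, if_pos]
    ring
  set a : ℝ := d ⬝ᵥ M *ᵥ x with ha
  set K : ℝ := d ⬝ᵥ M *ᵥ d with hK
  have key : ∀ t : ℝ, |t| ≤ min (x i) (x j) → 0 ≤ 2 * (t * a) + t ^ 2 * K := by
    intro t ht
    have hmemy : x + t • d ∈ stdSimplex ℝ ι := by
      constructor
      · intro k
        have habs := abs_le.mp ht
        have hmin1 : min (x i) (x j) ≤ x i := min_le_left _ _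
        have hmin2 : min (x i) (x j) ≤ x j := min_le_right _ _
        simp only [Pi.add_apply, Pi.smul_apply, smul_eq_mul, hd]
        rcases eq_or_ne k i with rfl | hki
        · rw [if_pos rfl, if_neg hij]
          have hp := hpos k
          nlinarith [habs.1]
        · rw [if_neg hki]
          rcases eq_or_ne k j with rfl | hkj
          · rw [if_pos rfl]
            have hp := hpos k
            nlinarith [habs.2]
          · rw [if_neg hkj]
            have hp := (hpos k).le
            nlinarith
      · have : ∑ k, (x + t • d) k = (∑ k, x k) + t * ∑ k, d k := by
          simp [Finset.sum_add_distrib, Finset.mul_sum]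
        rw [this, hdsum, hmem.2]; ring
    have h0 := hmin _ hmemy
    have hexp : (x + t • d) ⬝ᵥ M *ᵥ (x + t • d) =
        x ⬝ᵥ M *ᵥ x + 2 * (t * a) + t ^ 2 * K := by
      rw [Matrix.mulVec_add, Matrix.mulVec_smul, dotProduct_add, add_dotProduct,
        add_dotProduct, dotProduct_smul, smul_dotProduct, smul_dotProduct,
        dot_symm hsym x d]
      simp only [smul_eq_mul, smul_dotProduct, dotProduct_smul, ha, hK]
      ring
    rw [hexp] at h0
    linarith
  have hab : a = 0 := by
    by_contra hne
    have hia := hpos i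
    have hja := hpos j
    set δ : ℝ := min (x i) (x j) with hδ
    have hδ0 : 0 < δ := lt_min hia hja
    set t0 : ℝ := min δ (|a| / (|K| + 1)) with ht0
    have ht00 : 0 < t0 := lt_min hδ0 (by positivity)
    set t : ℝ := if 0 < a then -t0 else t0 with ht
    have hta : t * a = -(t0 * |a|) := by
      rcases lt_or_ge 0 a with h | h
      · rw [ht, if_pos h, abs_of_pos h]; ring
      · rw [ht, if_neg (not_lt.mpr h), abs_of_nonpos h]; ring
    have htabs : |t| ≤ δ := by
      have : |t| = t0 := by
        rcases lt_or_ge 0 a with h | h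
        · rw [ht, if_pos h, abs_neg, abs_of_pos ht00]
        · rw [ht, if_neg (not_lt.mpr h), abs_of_pos ht00]
      rw [this, ht0]; exact min_le_left _ _
    have hkey := key t htabs
    have ht2K : t ^ 2 * K ≤ t0 * |a| := by
      have h1 : t ^ 2 = t0 ^ 2 := by
        rcases lt_or_ge 0 a with h | h
        · rw [ht, if_pos h]; ring
        · rw [ht, if_neg (not_lt.mpr h)]
      have h2 : t0 ≤ |a| / (|K| + 1) := min_le_right _ _
      have h3 : t ^ 2 * K ≤ t0 ^ 2 * |K| := by
        rw [h1]
        have : K ≤ |K| := le_abs_self K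
        nlinarith [sq_nonneg t0]
      have h4 : t0 * (|K| + 1) ≤ |a| := by
        rw [le_div_iff₀ (by positivity : (0:ℝ) < |K| + 1)] at h2
        exact h2
      nlinarith [abs_nonneg K, ht00.le]
    have habs : 0 < |a| := abs_pos.mpr hne
    nlinarith [hkey, hta, ht2K, ht00]
  rw [hdM] at hab
  linarith

lemma sum_pair (f : ι → ι → ℝ) (a b : ι) :
    ∑ k, ∑ l, (if k = a ∧ l = b then f k l else 0) = f a b := by
  rw [Finset.sum_eq_single a]
  · rw [Finset.sum_eq_single b]
    · simp
    · intro l _ hl; simp [hl]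
    · intro h; exact absurd (mem_univ b) h
  · intro k _ hk
    refine Finset.sum_eq_zero fun l _ => ?_
    simp [hk]
  · intro h; exact absurd (mem_univ a) h

lemma qf_restrict (A : Matrix ι ι ℝ) (x : ι → ℝ) (p : ι → Prop) [DecidablePred p] :
    (fun k => if p k then x k else 0) ⬝ᵥ A *ᵥ (fun k => if p k then x k else 0) =
    ∑ k, ∑ l, (if p k ∧ p l then x k * (A k l * x l) else 0) := by
  rw [qf_expand]
  refine Finset.sum_congr rfl fun k _ => Finset.sum_congr rfl fun l _ => ?_
  by_cases hk : p k <;> by_cases hl : p l <;> simp [hk, hl]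


lemma notcop_simplex {M : Matrix ι ι ℝ} (h : ¬ Copositive M) :
    ∃ y ∈ stdSimplex ℝ ι, y ⬝ᵥ M *ᵥ y < 0 := by
  unfold Copositive at h
  push_neg at h
  obtain ⟨y, hy, hqf⟩ := h
  have hsum0 : 0 ≤ ∑ i, y i := Finset.sum_nonneg fun i _ => hy i
  have hsum : 0 < ∑ i, y i := by
    rcases hsum0.lt_or_eq with h | h
    · exact h
    · exfalso
      have hall : ∀ i ∈ Finset.univ, y i = 0 :=
        (Finset.sum_eq_zero_iff_of_nonneg (fun i _ => hy i)).mp h.symm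
      have hy0 : y = 0 := funext fun i => hall i (mem_univ i)
      rw [hy0] at hqf
      simp at hqf
  set t : ℝ := (∑ i, y i)⁻¹ with htdef
  have ht : 0 < t := inv_pos.mpr hsum
  refine ⟨t • y, ⟨fun i => ?_, ?_⟩, ?_⟩
  · exact mul_nonneg ht.le (hy i)
  · simp only [Pi.smul_apply, smul_eq_mul, ← Finset.mul_sum]
    exact inv_mul_cancel₀ (ne_of_gt hsum)
  · have : (t • y) ⬝ᵥ M *ᵥ (t • y) = t * (t * (y ⬝ᵥ M *ᵥ y)) := by
      rw [Matrix.mulVec_smul, smul_dotProduct, dotProduct_smul]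
      simp [smul_eq_mul]
    rw [this]
    have hq := mul_neg_of_pos_of_neg (mul_pos ht ht) hqf
    rw [mul_assoc] at hq
    linarith


lemma copositive_submatrix {A : Matrix ι ι ℝ} (hc : Copositive A) (e : κ ≃ ι) :
    Copositive (A.submatrix e e) := by
  intro x hx
  have key : x ⬝ᵥ (A.submatrix e e) *ᵥ x =
      (fun i => x (e.symm i)) ⬝ᵥ A *ᵥ (fun i => x (e.symm i)) := by
    rw [qf_expand, qf_expand]
    refine Fintype.sum_equiv e _ _ fun k => ?_
    refine Fintype.sum_equiv e _ _ fun l => ?_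
    simp [Matrix.submatrix_apply]
  rw [key]
  exact hc _ fun i => hx _

lemma isSymm_submatrix {A : Matrix ι ι ℝ} (hs : A.IsSymm) (e : κ → ι) :
    (A.submatrix e e).IsSymm := by
  ext k l
  simp [Matrix.submatrix_apply, hs.apply]

lemma isSPN_of_submatrix {A : Matrix ι ι ℝ} (e : κ ≃ ι)
    (h : IsSPN (A.submatrix e e)) : IsSPN A := by
  obtain ⟨P, N, hP, hN, hNn, hEq⟩ := h
  refine ⟨P.submatrix e.symm e.symm, N.submatrix e.symm e.symm, hP.submatrix _,
    isSymm_submatrix hN _, fun i j => hNn _ _, ?_⟩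
  ext i j
  have : A i j = (A.submatrix e e) (e.symm i) (e.symm j) := by
    simp [Matrix.submatrix_apply]
  rw [this, hEq]
  simp [Matrix.add_apply, Matrix.submatrix_apply]


end Helpers

lemma path_spn {n : ℕ} (B : Matrix (Fin n) (Fin n) ℝ) (hsym : B.IsSymm) (hcop : Copositive B)
    (htri : ∀ k l : Fin n, k.val + 2 ≤ l.val → B k l = 0) :
    ∃ P N : Matrix (Fin n) (Fin n) ℝ, P.PosSemidef ∧ N.IsSymm ∧ (∀ i j, 0 ≤ N i j) ∧
      B = P + N := by
  classical
  -- edge values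
  set b : ℕ → ℝ := fun t => if h : t + 1 < n then B ⟨t, by omega⟩ ⟨t + 1, h⟩ else 0 with hb
  have hbval : ∀ (k l : Fin n), l.val = k.val + 1 → B k l = b k.val := by
    intro k l hl
    have h1 : k.val + 1 < n := hl ▸ l.isLt
    have e2 : l = ⟨k.val + 1, h1⟩ := Fin.ext hl
    simp only [hb, dif_pos h1, e2]
  -- the "same block" relation
  set same : Fin n → Fin n → Prop :=
    fun k l => ∀ t : ℕ, min k.val l.val ≤ t → t + 1 ≤ max k.val l.val → b t ≤ 0 with hsame
  have same_refl : ∀ k, same k k := by intro k t h1 h2; omega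
  have same_symm : ∀ {k l}, same k l → same l k := by
    intro k l h t h1 h2
    exact h t (by omega) (by omega)
  have same_trans : ∀ {k l m}, same k l → same l m → same k m := by
    intro k l m h1 h2 t ht1 ht2
    have : (min k.val l.val ≤ t ∧ t + 1 ≤ max k.val l.val) ∨
        (min l.val m.val ≤ t ∧ t + 1 ≤ max l.val m.val) := by omega
    rcases this with ⟨a, c⟩ | ⟨a, c⟩
    exacts [h1 t a c, h2 t a c]
  -- representative
  have hex : ∀ k : Fin n, ∃ j : ℕ, ∃ h : j < n, same ⟨j, h⟩ k :=
    fun k => ⟨k.val, k.isLt, by simpa using same_refl k⟩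
  set rk : Fin n → ℕ := fun k => Nat.find (hex k) with hrk
  have hrk_spec : ∀ k, ∃ h : rk k < n, same ⟨rk k, h⟩ k := fun k => Nat.find_spec (hex k)
  have hrk_lt : ∀ k, rk k < n := fun k => (hrk_spec k).1
  have hrk_same : ∀ k, same ⟨rk k, hrk_lt k⟩ k := fun k => (hrk_spec k).2
  have hrk_min : ∀ k (j : ℕ) (h : j < n), same ⟨j, h⟩ k → rk k ≤ j := by
    intro k j h hs
    exact Nat.find_min' (hex k) ⟨h, hs⟩
  have key : ∀ k l, same k l ↔ rk k = rk l := by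
    intro k l
    constructor
    · intro hkl
      have h1 : same ⟨rk k, hrk_lt k⟩ l := same_trans (hrk_same k) hkl
      have h2 : same ⟨rk l, hrk_lt l⟩ k := same_trans (hrk_same l) (same_symm hkl)
      exact le_antisymm (hrk_min k _ _ h2) (hrk_min l _ _ h1)
    · intro h
      refine same_trans (same_symm (hrk_same k)) ?_
      have : (⟨rk k, hrk_lt k⟩ : Fin n) = ⟨rk l, hrk_lt l⟩ := Fin.ext h
      rw [this]; exact hrk_same l
  set P : Matrix (Fin n) (Fin n) ℝ := fun k l => if rk k = rk l then B k l else 0 with hP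
  have hPsym : P.IsSymm := by
    ext k l
    simp only [hP, transpose_apply]
    show (if rk l = rk k then B l k else 0) = _
    rcases eq_or_ne (rk k) (rk l) with h | h
    · simp [h, hsym.apply]
    · simp [h, Ne.symm h]
  have hPcop : Copositive P := by
    intro x hx
    have expand : x ⬝ᵥ P *ᵥ x =
        ∑ j ∈ Finset.range n, (fun k => if rk k = j then x k else 0) ⬝ᵥ B *ᵥ
          (fun k => if rk k = j then x k else 0) := by
      have hkl : ∀ k l : Fin n, (∑ j ∈ Finset.range n,
          (if rk k = j then x k else 0) * (B k l * (if rk l = j then x l else 0)))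
          = x k * (P k l * x l) := by
        intro k l
        rw [Finset.sum_eq_single (rk k)]
        · rcases eq_or_ne (rk k) (rk l) with h | h
          · simp [hP, h, if_pos rfl]
          · simp [hP, h, Ne.symm h]
        · intro j _ hj
          simp [Ne.symm hj]
        · intro h
          exact absurd (Finset.mem_range.mpr (hrk_lt k)) h
      have hrhs : ∀ j : ℕ, (fun k => if rk k = j then x k else 0) ⬝ᵥ B *ᵥ
          (fun k => if rk k = j then x k else 0) = ∑ k, ∑ l,
          (if rk k = j then x k else 0) * (B k l * (if rk l = j then x l else 0)) :=
        fun j => qf_expand B _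
      calc x ⬝ᵥ P *ᵥ x = ∑ k, ∑ l, x k * (P k l * x l) := qf_expand P x
        _ = ∑ k : Fin n, ∑ l : Fin n, ∑ j ∈ Finset.range n,
            (if rk k = j then x k else 0) * (B k l * (if rk l = j then x l else 0)) :=
          Finset.sum_congr rfl fun k _ => Finset.sum_congr rfl fun l _ => (hkl k l).symm
        _ = ∑ k : Fin n, ∑ j ∈ Finset.range n, ∑ l : Fin n,
            (if rk k = j then x k else 0) * (B k l * (if rk l = j then x l else 0)) :=
          Finset.sum_congr rfl fun k _ => Finset.sum_comm
        _ = ∑ j ∈ Finset.range n, ∑ k : Fin n, ∑ l : Fin n,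
            (if rk k = j then x k else 0) * (B k l * (if rk l = j then x l else 0)) :=
          Finset.sum_comm
        _ = ∑ j ∈ Finset.range n, (fun k => if rk k = j then x k else 0) ⬝ᵥ B *ᵥ
            (fun k => if rk k = j then x k else 0) :=
          Finset.sum_congr rfl fun j _ => (hrhs j).symm
    rw [expand]
    refine Finset.sum_nonneg fun j _ => hcop _ fun i => ?_
    split
    · exact hx i
    · exact le_refl 0
  have main_neg : ∀ k l : Fin n, k.val < l.val → same k l → B k l ≤ 0 := by
    intro k l hlt hskl
    rcases Nat.lt_or_ge (k.val + 1) l.val with h2 | h2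
    · exact le_of_eq (htri k l (by omega))
    · have hl : l.val = k.val + 1 := by omega
      rw [hbval k l hl]
      exact hskl k.val (by omega) (by omega)
  have main_pos : ∀ k l : Fin n, k.val < l.val → ¬ same k l → 0 ≤ B k l := by
    intro k l hlt hnskl
    rcases Nat.lt_or_ge (k.val + 1) l.val with h2 | h2
    · exact ge_of_eq (htri k l (by omega))
    · have hl : l.val = k.val + 1 := by omega
      rw [hbval k l hl]
      simp only [hsame, not_forall] at hnskl
      obtain ⟨t, ht1, ht2, ht3⟩ := hnskl
      have : t = k.val := by omega
      subst this
      exact le_of_lt (lt_of_not_ge ht3)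
  have hPoff : ∀ k l, k ≠ l → P k l ≤ 0 := by
    intro k l hne
    by_cases h : rk k = rk l
    · have hskl : same k l := (key k l).mpr h
      simp only [hP, if_pos h]
      rcases Nat.lt_trichotomy k.val l.val with hlt | heq | hgt
      · exact main_neg k l hlt hskl
      · exact absurd (Fin.ext heq) hne
      · rw [← hsym.apply k l]
        exact main_neg l k hgt (same_symm hskl)
    · simp [hP, h]
  have hPsd : P.PosSemidef := nonpos_offdiag_psd hPsym hPcop hPoff
  refine ⟨P, B - P, hPsd, hsym.sub hPsym, ?_, by abel⟩
  intro k l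
  rw [Matrix.sub_apply]
  by_cases h : rk k = rk l
  · simp [hP, if_pos h]
  · simp only [hP, if_neg h, sub_zero]
    have hne : k ≠ l := by rintro rfl; exact h rfl
    have hnskl : ¬ same k l := fun hs => h ((key k l).mp hs)
    rcases Nat.lt_trichotomy k.val l.val with hlt | heq | hgt
    · exact main_pos k l hlt hnskl
    · exact absurd (Fin.ext heq) hne
    · rw [← hsym.apply k l]
      exact main_pos l k hgt (fun hs => hnskl (same_symm hs))


set_option maxHeartbeats 1000000 in
lemma core2 {n : ℕ} (hn : 3 ≤ n) (A : Matrix (Fin n) (Fin n) ℝ)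
    (hsym : A.IsSymm) (hcop : Copositive A)
    (hadjV : ∀ i j : Fin n, A i j ≠ 0 → i = j ∨ j.val = i.val + 1 ∨ i.val = j.val + 1 ∨
      (i.val = 0 ∧ j.val = n-1) ∨ (i.val = n-1 ∧ j.val = 0))
    (hcpos : 0 < A ⟨n-1, by omega⟩ ⟨0, by omega⟩) : IsSPN A := by
  classical
  have h0n : 0 < n := by omega
  have hn1 : n - 1 < n := by omega
  set i0 : Fin n := ⟨0, h0n⟩ with hi0def
  set iN : Fin n := ⟨n-1, hn1⟩ with hiNdef
  haveI : Nonempty (Fin n) := ⟨⟨0, h0n⟩⟩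
  have hi0val : (i0 : ℕ) = 0 := rfl
  have hiNval : (iN : ℕ) = n - 1 := rfl
  have hi0N : i0 ≠ iN := by
    simp only [hi0def, hiNdef, ne_eq, Fin.mk.injEq]
    omega
  set c : ℝ := A iN i0 with hcdef
  have hc_pos : 0 < c := hcpos
  have hcsym : A i0 iN = c := by rw [hcdef]; exact (hsym.apply i0 iN).symm
  set E : Matrix (Fin n) (Fin n) ℝ :=
    fun k l => (if k = i0 ∧ l = iN then (1:ℝ) else 0) +
      (if k = iN ∧ l = i0 then (1:ℝ) else 0) with hEdef
  have hEsym : E.IsSymm := by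
    ext k l
    simp only [transpose_apply, hEdef]
    show ((if l = i0 ∧ k = iN then (1:ℝ) else 0) + (if l = iN ∧ k = i0 then (1:ℝ) else 0)) =
      (if k = i0 ∧ l = iN then (1:ℝ) else 0) + (if k = iN ∧ l = i0 then (1:ℝ) else 0)
    rw [add_comm]
    congr 1
    · exact if_congr and_comm rfl rfl
    · exact if_congr and_comm rfl rfl
  set B : Matrix (Fin n) (Fin n) ℝ := A - c • E with hBdef
  have hBapp : ∀ k l, B k l = A k l - c * E k l := by
    intro k l; simp [hBdef, Matrix.sub_apply]
  have hBsym : B.IsSymm := by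
    ext k l
    simp only [transpose_apply, hBapp]
    rw [hsym.apply k l, ← hEsym.apply l k]
  have hBA : ∀ k l, ¬(k = i0 ∧ l = iN) → ¬(k = iN ∧ l = i0) → B k l = A k l := by
    intro k l h1 h2
    rw [hBapp]
    simp [hEdef, h1, h2]
  have hBc1 : B i0 iN = 0 := by
    rw [hBapp]
    simp [hEdef, hi0N, hcsym, Ne.symm hi0N]
  have hBc2 : B iN i0 = 0 := by
    rw [hBapp]
    simp [hEdef, hi0N, Ne.symm hi0N, hcdef]
  have hE_mulVec : ∀ (x : Fin n → ℝ) (k : Fin n),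
      (E *ᵥ x) k = (if k = i0 then x iN else 0) + (if k = iN then x i0 else 0) := by
    intro x k
    simp only [mulVec, dotProduct, hEdef, add_mul, ite_mul, one_mul, zero_mul,
      Finset.sum_add_distrib]
    congr 1
    · rcases eq_or_ne k i0 with rfl | h
      · simp
      · simp [h]
    · rcases eq_or_ne k iN with rfl | h
      · simp
      · simp [h]
  have hE_qf : ∀ x : Fin n → ℝ, x ⬝ᵥ E *ᵥ x = x i0 * x iN + x iN * x i0 := by
    intro x
    simp only [dotProduct]
    rw [Finset.sum_congr rfl fun k _ => by rw [hE_mulVec x k]]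
    simp only [mul_add, Finset.sum_add_distrib, mul_ite, mul_zero]
    congr 1 <;> simp
  have hqf_shift : ∀ (d : ℝ) (x : Fin n → ℝ),
      x ⬝ᵥ (B + d • E) *ᵥ x = x ⬝ᵥ A *ᵥ x + (d - c) * (x i0 * x iN + x iN * x i0) := by
    intro d x
    rw [hBdef]
    have hE2 : A - c • E + d • E = A + (d - c) • E := by rw [sub_smul]; abel
    rw [hE2, Matrix.add_mulVec, dotProduct_add, Matrix.smul_mulVec, dotProduct_smul,
      smul_eq_mul, hE_qf]
  have htriB : ∀ k l : Fin n, k.val + 2 ≤ l.val → B k l = 0 := by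
    intro k l hkl
    by_cases h1 : k = i0 ∧ l = iN
    · rw [h1.1, h1.2, hBc1]
    · have h2 : ¬(k = iN ∧ l = i0) := by
        rintro ⟨rfl, rfl⟩
        simp only [hiNdef, hi0def] at hkl
        omega
      rw [hBA k l h1 h2]
      by_contra hA
      rcases hadjV k l hA with h | h | h | h | h
      · rw [h] at hkl; omega
      · omega
      · omega
      · exact h1 ⟨Fin.ext h.1, Fin.ext h.2⟩
      · omega
  have htriB' : ∀ k l : Fin n, l.val + 2 ≤ k.val → B k l = 0 := by
    intro k l hkl
    rw [hBsym.apply l k]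
    exact htriB l k hkl
  -- the fundamental splitting identity
  have hsplit : ∀ (j j1 : Fin n), j.val < n - 1 → j1.val = j.val + 1 → ∀ x : Fin n → ℝ,
      x ⬝ᵥ B *ᵥ x =
        (fun k : Fin n => if (k:ℕ) ≤ j.val then x k else 0) ⬝ᵥ A *ᵥ
          (fun k : Fin n => if (k:ℕ) ≤ j.val then x k else 0) +
        (fun k : Fin n => if j.val < (k:ℕ) then x k else 0) ⬝ᵥ A *ᵥ
          (fun k : Fin n => if j.val < (k:ℕ) then x k else 0) +
        (x j * (B j j1 * x j1) + x j1 * (B j1 j * x j)) := by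
    intro j j1 hj hj1 x
    have cross1 : (∑ k, ∑ l, (if k = j ∧ l = j1 then x k * (B k l * x l) else 0)) =
        x j * (B j j1 * x j1) := by
      simpa using sum_pair (fun k l => x k * (B k l * x l)) j j1
    have cross2 : (∑ k, ∑ l, (if k = j1 ∧ l = j then x k * (B k l * x l) else 0)) =
        x j1 * (B j1 j * x j) := by
      simpa using sum_pair (fun k l => x k * (B k l * x l)) j1 j
    have point : ∀ k l : Fin n, x k * (B k l * x l) =
        (if (k:ℕ) ≤ j.val ∧ (l:ℕ) ≤ j.val then x k * (A k l * x l) else 0) +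
        (if j.val < (k:ℕ) ∧ j.val < (l:ℕ) then x k * (A k l * x l) else 0) +
        ((if k = j ∧ l = j1 then x k * (B k l * x l) else 0) +
         (if k = j1 ∧ l = j then x k * (B k l * x l) else 0)) := by
      intro k l
      by_cases hk : (k:ℕ) ≤ j.val <;> by_cases hl : (l:ℕ) ≤ j.val
      · -- both left
        have e2 : ¬(j.val < (k:ℕ) ∧ j.val < (l:ℕ)) := by omega
        have e3 : ¬(k = j ∧ l = j1) := by
          rintro ⟨rfl, rfl⟩; omega
        have e4 : ¬(k = j1 ∧ l = j) := by
          rintro ⟨rfl, rfl⟩; omega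
        have hBAkl : B k l = A k l := by
          refine hBA k l ?_ ?_
          · rintro ⟨rfl, rfl⟩
            have : (iN:ℕ) = n - 1 := rfl
            omega
          · rintro ⟨rfl, rfl⟩
            have : (iN:ℕ) = n - 1 := rfl
            omega
        rw [if_pos (And.intro hk hl), if_neg e2, if_neg e3, if_neg e4, hBAkl]
        ring
      · -- k left, l right
        have e1 : ¬((k:ℕ) ≤ j.val ∧ (l:ℕ) ≤ j.val) := by tauto
        have e2 : ¬(j.val < (k:ℕ) ∧ j.val < (l:ℕ)) := by omega
        have e4 : ¬(k = j1 ∧ l = j) := by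
          rintro ⟨rfl, rfl⟩; omega
        by_cases e3 : k = j ∧ l = j1
        · rw [if_neg e1, if_neg e2, if_pos e3, if_neg e4]
          ring
        · have hB0 : B k l = 0 := by
            rcases Nat.lt_or_ge (k.val + 1) l.val with h2 | h2
            · exact htriB k l (by omega)
            · exfalso
              exact e3 ⟨Fin.ext (by omega), Fin.ext (by omega)⟩
          rw [if_neg e1, if_neg e2, if_neg e3, if_neg e4, hB0]
          ring
      · -- k right, l left
        have e1 : ¬((k:ℕ) ≤ j.val ∧ (l:ℕ) ≤ j.val) := by tauto
        have e2 : ¬(j.val < (k:ℕ) ∧ j.val < (l:ℕ)) := by omega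
        have e3 : ¬(k = j ∧ l = j1) := by
          rintro ⟨rfl, rfl⟩; omega
        by_cases e4 : k = j1 ∧ l = j
        · rw [if_neg e1, if_neg e2, if_neg e3, if_pos e4]
          ring
        · have hB0 : B k l = 0 := by
            rcases Nat.lt_or_ge (l.val + 1) k.val with h2 | h2
            · exact htriB' k l (by omega)
            · exfalso
              exact e4 ⟨Fin.ext (by omega), Fin.ext (by omega)⟩
          rw [if_neg e1, if_neg e2, if_neg e3, if_neg e4, hB0]
          ring
      · -- both right
        have e1 : ¬((k:ℕ) ≤ j.val ∧ (l:ℕ) ≤ j.val) := by tauto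
        have e3 : ¬(k = j ∧ l = j1) := by
          rintro ⟨rfl, rfl⟩; omega
        have e4 : ¬(k = j1 ∧ l = j) := by
          rintro ⟨rfl, rfl⟩; omega
        have hBAkl : B k l = A k l := by
          refine hBA k l ?_ ?_
          · rintro ⟨rfl, rfl⟩
            have : (i0:ℕ) = 0 := rfl
            omega
          · rintro ⟨rfl, rfl⟩
            have : (i0:ℕ) = 0 := rfl
            omega
        rw [if_neg e1, if_pos (And.intro (by omega) (by omega)), if_neg e3, if_neg e4, hBAkl]
        ring
    calc x ⬝ᵥ B *ᵥ x = ∑ k, ∑ l, x k * (B k l * x l) := qf_expand B x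
      _ = ∑ k : Fin n, ∑ l : Fin n,
          ((if (k:ℕ) ≤ j.val ∧ (l:ℕ) ≤ j.val then x k * (A k l * x l) else 0) +
          (if j.val < (k:ℕ) ∧ j.val < (l:ℕ) then x k * (A k l * x l) else 0) +
          ((if k = j ∧ l = j1 then x k * (B k l * x l) else 0) +
           (if k = j1 ∧ l = j then x k * (B k l * x l) else 0))) :=
        Finset.sum_congr rfl fun k _ => Finset.sum_congr rfl fun l _ => point k l
      _ = (∑ k : Fin n, ∑ l : Fin n,
            (if (k:ℕ) ≤ j.val ∧ (l:ℕ) ≤ j.val then x k * (A k l * x l) else 0)) +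
          (∑ k : Fin n, ∑ l : Fin n,
            (if j.val < (k:ℕ) ∧ j.val < (l:ℕ) then x k * (A k l * x l) else 0)) +
          ((∑ k : Fin n, ∑ l : Fin n, (if k = j ∧ l = j1 then x k * (B k l * x l) else 0)) +
           (∑ k : Fin n, ∑ l : Fin n, (if k = j1 ∧ l = j then x k * (B k l * x l) else 0))) := by
        simp only [Finset.sum_add_distrib]
      _ = _ := by
        rw [qf_restrict A x (fun k : Fin n => (k:ℕ) ≤ j.val), qf_restrict A x (fun k : Fin n => j.val < (k:ℕ)),
          cross1, cross2]
  have hEnn : ∀ k l, 0 ≤ E k l := by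
    intro k l
    simp only [hEdef]
    split_ifs <;> norm_num
  have hcEsym : ∀ d : ℝ, (d • E).IsSymm := by
    intro d
    unfold Matrix.IsSymm
    rw [Matrix.transpose_smul, hEsym]
  have hAeq : A = B + c • E := by
    rw [hBdef, sub_add_cancel]
  by_cases hBcop : Copositive B
  · -- easy branch : the path part is itself copositive
    obtain ⟨P, N, hP, hNs, hNn, hBPN⟩ := path_spn B hBsym hBcop htriB
    refine ⟨P, N + c • E, hP, hNs.add (hcEsym c), ?_, ?_⟩
    · intro i j
      have h1 := hNn i j
      have h2 : 0 ≤ c * E i j := mul_nonneg hc_pos.le (hEnn i j)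
      simp only [Matrix.add_apply, Matrix.smul_apply, smul_eq_mul]
      linarith
    · rw [hAeq, hBPN, add_assoc]
  · -- hard branch
    have hbneg : ∀ j j1 : Fin n, j.val < n - 1 → j1.val = j.val + 1 → B j j1 < 0 := by
      intro j j1 hj hj1
      by_contra hge
      push_neg at hge
      apply hBcop
      intro x hx
      rw [hsplit j j1 hj hj1 x]
      have hL := hcop (fun k : Fin n => if (k:ℕ) ≤ j.val then x k else 0)
        (fun i => by split <;> [exact hx i; exact le_refl 0])
      have hR := hcop (fun k : Fin n => if j.val < (k:ℕ) then x k else 0)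
        (fun i => by split <;> [exact hx i; exact le_refl 0])
      have hc1 : 0 ≤ x j * (B j j1 * x j1) :=
        mul_nonneg (hx j) (mul_nonneg hge (hx j1))
      have hc2 : 0 ≤ x j1 * (B j1 j * x j) := by
        rw [hBsym.apply j j1]
        exact mul_nonneg (hx j1) (mul_nonneg hge (hx j))
      linarith
    set S : Set ℝ := {d | 0 ≤ d ∧ ¬ Copositive (B + d • E)} with hSdef
    have hS0 : (0:ℝ) ∈ S := by
      refine ⟨le_refl 0, ?_⟩
      rw [zero_smul, add_zero]
      exact hBcop
    have hSne : S.Nonempty := ⟨0, hS0⟩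
    have hpair_nn : ∀ (x : Fin n → ℝ), (∀ i, 0 ≤ x i) →
        0 ≤ x i0 * x iN + x iN * x i0 := by
      intro x hx
      have := mul_nonneg (hx i0) (hx iN)
      have := mul_nonneg (hx iN) (hx i0)
      linarith
    have hSlt : ∀ d ∈ S, d ≤ c := by
      intro d hd
      by_contra hdc
      push_neg at hdc
      refine hd.2 ?_
      intro x hx
      rw [hqf_shift d x]
      have h1 := hcop x hx
      have h2 : 0 ≤ (d - c) * (x i0 * x iN + x iN * x i0) :=
        mul_nonneg (by linarith) (hpair_nn x hx)
      linarith
    have hSbdd : BddAbove S := ⟨c, hSlt⟩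
    set cs : ℝ := sSup S with hcsdef
    have hcs0 : 0 ≤ cs := le_csSup hSbdd hS0
    have hcsc : cs ≤ c := csSup_le hSne hSlt
    set P : Matrix (Fin n) (Fin n) ℝ := B + cs • E with hPdef
    have hPsym : P.IsSymm := hBsym.add (hcEsym cs)
    have hPapp : ∀ k l, P k l = B k l + cs * E k l := by
      intro k l
      simp [hPdef, Matrix.add_apply, Matrix.smul_apply]
    have hPcop : Copositive P := by
      intro x hx
      rw [hPdef, hqf_shift cs x]
      set pair := x i0 * x iN + x iN * x i0 with hpairdef
      have hpair0 : 0 ≤ pair := hpair_nn x hx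
      by_contra hneg
      push_neg at hneg
      set v : ℝ := x ⬝ᵥ A *ᵥ x + (cs - c) * pair with hvdef
      rcases eq_or_lt_of_le hcsc with heq | hlt
      · have h1 := hcop x hx
        rw [hvdef, heq, sub_self, zero_mul, add_zero] at hneg
        linarith
      · set ε : ℝ := min (c - cs) ((-v) / (pair + 1)) with hεdef
        have hε0 : 0 < ε := lt_min (by linarith) (div_pos (by linarith) (by positivity))
        set d : ℝ := cs + ε with hddef
        have hd0 : 0 ≤ d := by linarith
        have hdnotS : d ∉ S := by
          intro hdS
          have := le_csSup hSbdd hdS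
          rw [← hcsdef] at this
          linarith
        have hdcop : Copositive (B + d • E) := by
          by_contra hc'
          exact hdnotS ⟨hd0, hc'⟩
        have h2 := hdcop x hx
        rw [hqf_shift d x] at h2
        have hεle : ε ≤ (-v) / (pair + 1) := min_le_right _ _
        have hεpair : ε * pair < -v := by
          have h3 : ε * (pair + 1) ≤ -v := by
            rw [le_div_iff₀ (by positivity : (0:ℝ) < pair + 1)] at hεle
            exact hεle
          nlinarith
        have : x ⬝ᵥ A *ᵥ x + (d - c) * pair = v + ε * pair := by
          rw [hvdef, hddef]; ring
        rw [this] at h2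
        linarith
    have hcs_pos : 0 < cs := by
      rcases eq_or_lt_of_le hcs0 with heq | h
      · exfalso
        apply hBcop
        have : B = B + cs • E := by rw [← heq, zero_smul, add_zero]
        rw [this]
        exact hPcop
      · exact h
    have hnotcop : ∀ d, 0 ≤ d → d < cs → ¬ Copositive (B + d • E) := by
      intro d hd0 hdcs hcontra
      obtain ⟨s, hsS, hds⟩ := exists_lt_of_lt_csSup hSne (by rw [← hcsdef]; exact hdcs)
      refine hsS.2 ?_
      intro x hx
      have h1 := hcontra x hx
      rw [hqf_shift d x] at h1
      rw [hqf_shift s x]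
      have h2 : 0 ≤ (s - d) * (x i0 * x iN + x iN * x i0) :=
        mul_nonneg (by linarith) (hpair_nn x hx)
      linarith
    -- the minimizing sequence
    set ck : ℕ → ℝ := fun k => cs - cs / (k + 2) with hckdef
    have hck0 : ∀ k : ℕ, 0 ≤ ck k := by
      intro k
      have h2 : (1:ℝ) ≤ (k:ℝ) + 2 := by
        have : (0:ℝ) ≤ (k:ℝ) := Nat.cast_nonneg k
        linarith
      have h1 : cs / ((k:ℝ)+2) ≤ cs := div_le_self hcs0 h2
      simp only [hckdef]
      linarith
    have hckcs : ∀ k : ℕ, ck k < cs := by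
      intro k
      have : 0 < cs / ((k:ℝ)+2) := div_pos hcs_pos (by positivity)
      simp only [hckdef]
      linarith
    set Mk : ℕ → Matrix (Fin n) (Fin n) ℝ := fun k => B + ck k • E with hMkdef
    have hMke : ∀ k, Mk k = B + ck k • E := fun k => rfl
    have hMksym : ∀ k, (Mk k).IsSymm := fun k => hBsym.add (hcEsym _)
    have hMknc : ∀ k, ¬ Copositive (Mk k) := fun k => hnotcop (ck k) (hck0 k) (hckcs k)
    have hminex : ∀ k : ℕ, ∃ x, x ∈ stdSimplex ℝ (Fin n) ∧
        ∀ y ∈ stdSimplex ℝ (Fin n), x ⬝ᵥ (Mk k) *ᵥ x ≤ y ⬝ᵥ (Mk k) *ᵥ y := by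
      intro k
      obtain ⟨x, hxmem, hxmin⟩ := (isCompact_stdSimplex ℝ (Fin n)).exists_isMinOn
        stdSimplex_nonempty ((qf_continuous (Mk k)).continuousOn)
      exact ⟨x, hxmem, fun y hy => isMinOn_iff.mp hxmin y hy⟩
    choose xs hxsmem hxsmin using hminex
    have hμneg : ∀ k, xs k ⬝ᵥ (Mk k) *ᵥ xs k < 0 := by
      intro k
      obtain ⟨y, hymem, hyneg⟩ := notcop_simplex (hMknc k)
      exact lt_of_le_of_lt (hxsmin k y hymem) hyneg
    have hqfB0 : ∀ x : Fin n → ℝ,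
        x ⬝ᵥ B *ᵥ x = x ⬝ᵥ A *ᵥ x - c * (x i0 * x iN + x iN * x i0) := by
      intro x
      have h1 := hqf_shift 0 x
      rw [zero_smul, add_zero] at h1
      rw [h1]; ring
    have hqf_shiftB : ∀ (d : ℝ) (x : Fin n → ℝ), x ⬝ᵥ (B + d • E) *ᵥ x
        = x ⬝ᵥ B *ᵥ x + d * (x i0 * x iN + x iN * x i0) := by
      intro d x
      rw [hqf_shift d x, hqfB0 x]; ring
    have hxs_pos : ∀ k i, 0 < xs k i := by
      intro k i
      rcases ((hxsmem k).1 i).lt_or_eq with h | h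
      · exact h
      · exfalso
        have hx0 : xs k i = 0 := h.symm
        have hneg := hμneg k
        rw [hMke k, hqf_shiftB (ck k) (xs k)] at hneg
        rcases Nat.eq_zero_or_pos i.val with hiv | hiv
        · have hii : i = i0 := Fin.ext hiv
          rw [hii] at hx0
          rw [hx0] at hneg
          have h1 := hcop (xs k) ((hxsmem k).1)
          rw [hqfB0 (xs k), hx0] at hneg
          simp only [zero_mul, mul_zero, add_zero, zero_add] at hneg
          linarith
        · rcases Nat.lt_or_ge i.val (n-1) with hiv2 | hiv2
          · -- interior
            have hsp := hsplit i ⟨i.val + 1, by omega⟩ hiv2 rfl (xs k)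
            rw [hx0] at hsp
            have hL := hcop (fun m : Fin n => if (m:ℕ) ≤ i.val then xs k m else 0)
              (fun m => by split <;> [exact (hxsmem k).1 m; exact le_refl 0])
            have hR := hcop (fun m : Fin n => if i.val < (m:ℕ) then xs k m else 0)
              (fun m => by split <;> [exact (hxsmem k).1 m; exact le_refl 0])
            have hBnn : 0 ≤ xs k ⬝ᵥ B *ᵥ xs k := by
              rw [hsp]
              simp only [zero_mul, mul_zero, add_zero]
              linarith [hL, hR]
            have hpairnn := hpair_nn (xs k) ((hxsmem k).1)
            linarith [mul_nonneg (hck0 k) hpairnn]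
          · have hii : i = iN := Fin.ext (by omega)
            rw [hii] at hx0
            rw [hx0] at hneg
            have h1 := hcop (xs k) ((hxsmem k).1)
            rw [hqfB0 (xs k), hx0] at hneg
            simp only [zero_mul, mul_zero, add_zero, zero_add] at hneg
            linarith
    have hmul : ∀ k, ∀ i j : Fin n, ((Mk k) *ᵥ xs k) i = ((Mk k) *ᵥ xs k) j :=
      fun k => min_multiplier (hMksym k) (hxsmem k) (fun i => hxs_pos k i) (hxsmin k)
    set μ : ℕ → ℝ := fun k => xs k ⬝ᵥ (Mk k) *ᵥ xs k with hμdef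
    have hconst : ∀ (k : ℕ) (i : Fin n), ((Mk k) *ᵥ xs k) i = μ k := by
      intro k i
      have h1 : μ k = ∑ j, xs k j * ((Mk k) *ᵥ xs k) j := rfl
      rw [Finset.sum_congr rfl (fun j _ => by rw [hmul k j i])] at h1
      rw [← Finset.sum_mul, (hxsmem k).2, one_mul] at h1
      exact h1.symm
    have hpair_le2 : ∀ k : ℕ,
        xs k i0 * xs k iN + xs k iN * xs k i0 ≤ 2 := by
      intro k
      have h1 := stdSimplex_coord_le_one (hxsmem k) i0
      have h2 := stdSimplex_coord_le_one (hxsmem k) iN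
      have h3 := (hxsmem k).1 i0
      have h4 := (hxsmem k).1 iN
      nlinarith
    have hμlb : ∀ k, -(2 * (cs - ck k)) ≤ μ k := by
      intro k
      have h1 : xs k ⬝ᵥ P *ᵥ xs k =
          μ k + (cs - ck k) * (xs k i0 * xs k iN + xs k iN * xs k i0) := by
        rw [hPdef, hqf_shiftB cs, hμdef]
        simp only [hMke k]
        rw [hqf_shiftB (ck k)]
        ring
      have h2 := hPcop (xs k) ((hxsmem k).1)
      rw [hPdef] at h1
      have h5 := hpair_le2 k
      have h6 := hpair_nn (xs k) ((hxsmem k).1)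
      have h7 : 0 ≤ cs - ck k := le_of_lt (by linarith [hckcs k])
      nlinarith
    -- pass to a convergent subsequence
    obtain ⟨xstar, hxstar_mem, φ, hφmono, hφtend⟩ :=
      (isCompact_stdSimplex ℝ (Fin n)).tendsto_subseq (fun k => hxsmem k)
    have hxstar_nn : ∀ i, 0 ≤ xstar i := hxstar_mem.1
    have hker : P *ᵥ xstar = 0 := by
      funext i
      have t1 : Filter.Tendsto (fun m => (P *ᵥ xs (φ m)) i) Filter.atTop
          (nhds ((P *ᵥ xstar) i)) :=
        ((mulVec_apply_continuous P i).tendsto xstar).comp hφtend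
      have key : ∀ m : ℕ, |(P *ᵥ xs m) i| ≤ 3 * cs / ((m:ℝ) + 2) := by
        intro m
        have hPMk : P = Mk m + (cs - ck m) • E := by
          rw [hPdef, hMke m, add_assoc, ← add_smul]
          congr 2
          ring
        have e1 : (P *ᵥ xs m) i = μ m + (cs - ck m) * ((E *ᵥ xs m) i) := by
          rw [hPMk, Matrix.add_mulVec, Matrix.smul_mulVec]
          simp only [Pi.add_apply, Pi.smul_apply, smul_eq_mul]
          rw [hconst m i]
        have hcsck : cs - ck m = cs / ((m:ℝ) + 2) := by
          simp only [hckdef]; ring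
        have hμles : |μ m| ≤ 2 * (cs - ck m) := by
          rw [abs_le]
          constructor
          · exact hμlb m
          · have h8 : μ m < 0 := hμneg m
            have h9 : ck m < cs := hckcs m
            linarith
        have hE01 : 0 ≤ (E *ᵥ xs m) i ∧ (E *ᵥ xs m) i ≤ 1 := by
          rw [hE_mulVec]
          constructor
          · have h3 := (hxsmem m).1 i0
            have h4 := (hxsmem m).1 iN
            split_ifs <;> simp <;> linarith
          · have h1 := stdSimplex_coord_le_one (hxsmem m) i0
            have h2 := stdSimplex_coord_le_one (hxsmem m) iN
            have h3 := (hxsmem m).1 i0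
            have h4 := (hxsmem m).1 iN
            split_ifs with hh1 hh2
            · exact absurd (hh1.symm.trans hh2) hi0N
            · simp only [add_zero]; linarith
            · simp only [zero_add]; linarith
            · norm_num
        have h3cs : 3 * cs / ((m:ℝ) + 2) = 3 * (cs - ck m) := by rw [hcsck]; ring
        rw [e1, h3cs]
        have h7 : 0 ≤ cs - ck m := le_of_lt (by linarith [hckcs m])
        rw [abs_le]
        have hw0 : 0 ≤ (cs - ck m) * ((E *ᵥ xs m) i) := mul_nonneg h7 hE01.1
        have hw1 : (cs - ck m) * ((E *ᵥ xs m) i) ≤ cs - ck m :=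
          mul_le_of_le_one_right h7 hE01.2
        have habs := abs_le.mp hμles
        constructor
        · linarith [habs.1]
        · linarith [habs.2]
      have t2 : Filter.Tendsto (fun m => (P *ᵥ xs (φ m)) i) Filter.atTop (nhds 0) := by
        refine squeeze_zero_norm (a := fun m : ℕ => 3 * cs / ((m:ℝ) + 2)) ?_ ?_
        · intro m
          rw [Real.norm_eq_abs]
          refine le_trans (key (φ m)) ?_
          have hφge : (m:ℝ) ≤ (φ m : ℝ) := Nat.cast_le.mpr (hφmono.le_apply)
          have h1 : (0:ℝ) < (m:ℝ) + 2 := by positivity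
          have h2 : ((m:ℝ) + 2) ≤ ((φ m : ℝ) + 2) := by linarith
          exact div_le_div_of_nonneg_left (by linarith [hcs_pos.le]) h1 h2
        · have ht : Filter.Tendsto (fun m : ℕ => ((m:ℝ) + 2)) Filter.atTop Filter.atTop :=
            Filter.tendsto_atTop_add_const_right _ 2 tendsto_natCast_atTop_atTop
          exact Filter.Tendsto.div_atTop tendsto_const_nhds ht
      exact tendsto_nhds_unique t1 t2
    -- rows of P ⬝ xstar
    have hrow : ∀ i : Fin n, ∑ j, P i j * xstar j = 0 := by
      intro i
      have h1 : (P *ᵥ xstar) i = 0 := by rw [hker]; rfl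
      simpa [mulVec, dotProduct] using h1
    have hEzero_row : ∀ i : Fin n, i ≠ i0 → i ≠ iN → ∀ j, E i j = 0 := by
      intro i ha hb j
      simp [hEdef, ha, hb]
    -- zeros of xstar propagate along the path
    have hstep : ∀ i : Fin n, 0 < i.val → i.val < n - 1 → xstar i = 0 →
        (∀ j : Fin n, (j.val + 1 = i.val ∨ j.val = i.val + 1) → xstar j = 0) := by
      intro i h1 h2 h0 j hj
      have hii0 : i ≠ i0 := fun hh => by rw [hh] at h1; omega
      have hiiN : i ≠ iN := fun hh => by rw [hh] at h2; omega
      have hterms : ∀ j' ∈ Finset.univ, P i j' * xstar j' ≤ 0 := by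
        intro j' _
        have hE0 : E i j' = 0 := hEzero_row i hii0 hiiN j'
        rcases Nat.lt_trichotomy j'.val i.val with h | h | h
        · rcases Nat.lt_or_ge (j'.val + 1) i.val with hh | hh
          · have hz : P i j' = 0 := by rw [hPapp, htriB' i j' (by omega), hE0]; ring
            rw [hz, zero_mul]
          · have hj'i : i.val = j'.val + 1 := by omega
            have hBlt : B i j' < 0 := by
              rw [hBsym.apply j' i]
              exact hbneg j' i (by omega) hj'i
            have hz : P i j' = B i j' := by rw [hPapp, hE0]; ring
            rw [hz]
            nlinarith [hxstar_nn j', hBlt]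
        · have hz : j' = i := Fin.ext h
          rw [hz, h0, mul_zero]
        · rcases Nat.lt_or_ge (i.val + 1) j'.val with hh | hh
          · have hz : P i j' = 0 := by rw [hPapp, htriB i j' (by omega), hE0]; ring
            rw [hz, zero_mul]
          · have hij' : j'.val = i.val + 1 := by omega
            have hBlt : B i j' < 0 := hbneg i j' (by omega) hij'
            have hz : P i j' = B i j' := by rw [hPapp, hE0]; ring
            rw [hz]
            nlinarith [hxstar_nn j', hBlt]
      have hall := (Finset.sum_eq_zero_iff_of_nonpos hterms).mp (hrow i)
      have hj2 := hall j (mem_univ j)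
      have hE0j : E i j = 0 := hEzero_row i hii0 hiiN j
      have hPij : P i j < 0 := by
        rcases hj with hja | hjb
        · have hz : P i j = B i j := by rw [hPapp, hE0j]; ring
          rw [hz, hBsym.apply j i]
          exact hbneg j i (by omega) (by omega)
        · have hz : P i j = B i j := by rw [hPapp, hE0j]; ring
          rw [hz]
          exact hbneg i j (by omega) hjb
      rcases mul_eq_zero.mp hj2 with h' | h'
      · exact absurd h' (ne_of_lt hPij)
      · exact h'
    -- no interior zeros
    have hinterior : ∀ i : Fin n, 0 < i.val → i.val < n - 1 → 0 < xstar i := by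
      intro i h1 h2
      rcases (hxstar_nn i).lt_or_eq with h | h
      · exact h
      · exfalso
        have h0 : xstar i = 0 := h.symm
        have hilt : i.val < n := i.isLt
        have hdown : ∀ d : ℕ, d ≤ i.val → xstar ⟨i.val - d, by omega⟩ = 0 := by
          intro d
          induction d with
          | zero =>
            intro _
            have he : (⟨i.val - 0, by omega⟩ : Fin n) = i := Fin.ext (by simp)
            rw [he]; exact h0
          | succ d ih =>
            intro hd
            have hprev : xstar ⟨i.val - d, by omega⟩ = 0 := ih (by omega)
            have := hstep ⟨i.val - d, by omega⟩ (by simp; omega) (by simp; omega) hprev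
              ⟨i.val - (d+1), by omega⟩ (Or.inl (by simp; omega))
            exact this
        have hup : ∀ d : ℕ, ∀ _hd : i.val + d ≤ n - 1, xstar ⟨i.val + d, by omega⟩ = 0 := by
          intro d
          induction d with
          | zero =>
            intro _
            have he : (⟨i.val + 0, by omega⟩ : Fin n) = i := Fin.ext (by simp)
            rw [he]; exact h0
          | succ d ih =>
            intro hd
            have hprev : xstar ⟨i.val + d, by omega⟩ = 0 := ih (by omega)
            have := hstep ⟨i.val + d, by omega⟩ (by simp; omega) (by simp; omega) hprev
              ⟨i.val + (d+1), by omega⟩ (Or.inr (by simp; omega))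
            exact this
        have hallz : ∀ j : Fin n, xstar j = 0 := by
          intro j
          rcases le_or_gt j.val i.val with hle | hlt
          · have hz := hdown (i.val - j.val) (by omega)
            have hjj : (⟨i.val - (i.val - j.val), by omega⟩ : Fin n) = j := Fin.ext (by simp; omega)
            rwa [hjj] at hz
          · have hz := hup (j.val - i.val) (by omega)
            have hjj : (⟨i.val + (j.val - i.val), by omega⟩ : Fin n) = j := Fin.ext (by simp; omega)
            rwa [hjj] at hz
        have hsum := hxstar_mem.2
        rw [Finset.sum_congr rfl (fun j _ => hallz j)] at hsum
        simp at hsum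
    -- the endpoints cannot both vanish
    have hone : 1 < n := by omega
    have hnotboth : ¬(xstar i0 = 0 ∧ xstar iN = 0) := by
      rintro ⟨h01, hN1⟩
      have hterms : ∀ j' ∈ Finset.univ, P i0 j' * xstar j' ≤ 0 := by
        intro j' _
        by_cases hj0 : j' = i0
        · rw [hj0, h01, mul_zero]
        by_cases hjN : j' = iN
        · rw [hjN, hN1, mul_zero]
        have hv1 : 1 ≤ j'.val := by
          rcases Nat.eq_zero_or_pos j'.val with h | h
          · exact absurd (Fin.ext (by omega)) hj0
          · omega
        have hv2 : j'.val ≤ n - 2 := by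
          have : j'.val ≠ n - 1 := fun hh => hjN (Fin.ext (by omega))
          omega
        have hEij : E i0 j' = 0 := by simp [hEdef, hjN, hi0N]
        rcases Nat.lt_or_ge 1 j'.val with hgt | hle
        · have hz : P i0 j' = 0 := by rw [hPapp, htriB i0 j' (by omega), hEij]; ring
          rw [hz, zero_mul]
        · have hj1 : j'.val = 1 := by omega
          have hBlt : B i0 j' < 0 := hbneg i0 j' (by omega) (by omega)
          have hz : P i0 j' = B i0 j' := by rw [hPapp, hEij]; ring
          rw [hz]
          nlinarith [hxstar_nn j', hBlt]
      have hall := (Finset.sum_eq_zero_iff_of_nonpos hterms).mp (hrow i0)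
      set j1 : Fin n := ⟨1, hone⟩ with hj1def
      have hj1v : (j1 : ℕ) = 1 := rfl
      have hj2 := hall j1 (mem_univ j1)
      have hj1N : j1 ≠ iN := fun hh => by
        have := congrArg Fin.val hh
        rw [hj1v, hiNval] at this
        omega
      have hEij : E i0 j1 = 0 := by simp [hEdef, hj1N, hi0N]
      have hBlt : B i0 j1 < 0 := hbneg i0 j1 (by omega) (by omega)
      have hPlt : P i0 j1 < 0 := by
        have hz : P i0 j1 = B i0 j1 := by rw [hPapp, hEij]; ring
        rw [hz]; exact hBlt
      rcases mul_eq_zero.mp hj2 with h' | h'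
      · exact absurd h' (ne_of_lt hPlt)
      · have := hinterior j1 (by omega) (by omega)
        rw [h'] at this
        exact lt_irrefl 0 this
    -- choose the pivot for the master lemma
    obtain ⟨piv, hpiv⟩ : ∃ piv : Fin n, ∀ i, i ≠ piv → 0 < xstar i := by
      by_cases h01 : xstar i0 = 0
      · refine ⟨i0, fun i hi => ?_⟩
        rcases Nat.eq_zero_or_pos i.val with hv | hv
        · exact absurd (Fin.ext (by omega)) hi
        · rcases Nat.lt_or_ge i.val (n-1) with hv2 | hv2
          · exact hinterior i hv hv2
          · have hiiN : i = iN := Fin.ext (by omega)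
            rw [hiiN]
            rcases (hxstar_nn iN).lt_or_eq with h | h
            · exact h
            · exact absurd ⟨h01, h.symm⟩ hnotboth
      · refine ⟨iN, fun i hi => ?_⟩
        rcases Nat.lt_or_ge i.val (n-1) with hv2 | hv2
        · rcases Nat.eq_zero_or_pos i.val with hv | hv
          · have hii0 : i = i0 := Fin.ext (by omega)
            rw [hii0]
            exact (hxstar_nn i0).lt_of_ne (Ne.symm h01)
          · exact hinterior i hv hv2
        · exact absurd (Fin.ext (by omega)) hi
    have hPpsd : P.PosSemidef := master_psd hPsym hPcop xstar hxstar_nn hker piv hpiv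
    refine ⟨P, (c - cs) • E, hPpsd, hcEsym _, ?_, ?_⟩
    · intro i j
      have hE := hEnn i j
      simp only [Matrix.smul_apply, smul_eq_mul]
      have : 0 ≤ c - cs := by linarith
      exact mul_nonneg this hE
    · rw [hPdef]
      have hsm : cs • E + (c - cs) • E = c • E := by rw [← add_smul]; congr 1; ring
      rw [add_assoc, hsm, ← hAeq]


lemma core1 {n : ℕ} (hn : 3 ≤ n) (A : Matrix (Fin n) (Fin n) ℝ)
    (hsym : A.IsSymm) (hcop : Copositive A)
    (hadjV : ∀ i j : Fin n, A i j ≠ 0 → i = j ∨ j.val = i.val + 1 ∨ i.val = j.val + 1 ∨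
      (i.val = 0 ∧ j.val = n-1) ∨ (i.val = n-1 ∧ j.val = 0)) : IsSPN A := by
  classical
  haveI : NeZero n := ⟨by omega⟩
  by_cases hpos : ∃ i j : Fin n, i ≠ j ∧ 0 < A i j
  · obtain ⟨i, j, hij, hApos⟩ := hpos
    have hone : ((1 : Fin n) : ℕ) = 1 := by
      rw [Fin.val_one', Nat.mod_eq_of_lt (by omega)]
    have hadd1 : ∀ x : Fin n, ((x + 1 : Fin n) : ℕ) = (x.val + 1) % n := by
      intro x
      rw [Fin.val_add, hone]
    -- find an edge (p, p+1) with positive entry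
    obtain ⟨p, hp⟩ : ∃ p : Fin n, 0 < A p (p + 1) := by
      rcases hadjV i j (ne_of_gt hApos) with h | h | h | h | h
      · exact absurd h hij
      · refine ⟨i, ?_⟩
        have hlt : i.val + 1 < n := by rw [← h]; exact j.isLt
        have : j = i + 1 := Fin.ext (by rw [hadd1, Nat.mod_eq_of_lt hlt, h])
        rwa [← this]
      · refine ⟨j, ?_⟩
        have hlt : j.val + 1 < n := by rw [← h]; exact i.isLt
        have : i = j + 1 := Fin.ext (by rw [hadd1, Nat.mod_eq_of_lt hlt, h])
        rw [← this, ← hsym.apply j i]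
        exact hApos
      · refine ⟨j, ?_⟩
        have : i = j + 1 := by
          refine Fin.ext ?_
          rw [hadd1, h.2, h.1]
          have h2 : n - 1 + 1 = n := by omega
          rw [h2, Nat.mod_self]
        rw [← this, ← hsym.apply j i]
        exact hApos
      · refine ⟨i, ?_⟩
        have : j = i + 1 := by
          refine Fin.ext ?_
          rw [hadd1, h.1, h.2]
          have h2 : n - 1 + 1 = n := by omega
          rw [h2, Nat.mod_self]
        rwa [← this]
    -- rotate so that the positive edge is the wrap-around edge
    set σ : Fin n ≃ Fin n := Equiv.addRight (p + 1) with hσdef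
    set A' : Matrix (Fin n) (Fin n) ℝ := A.submatrix σ σ with hA'def
    have hA'app : ∀ k l, A' k l = A (k + (p+1)) (l + (p+1)) := fun k l => rfl
    have hgroup : ∀ k l : Fin n, A k l ≠ 0 → k = l ∨ l = k + 1 ∨ k = l + 1 := by
      intro k l hA
      rcases hadjV k l hA with h | h | h | h | h
      · exact Or.inl h
      · refine Or.inr (Or.inl (Fin.ext ?_))
        have hlt : k.val + 1 < n := by rw [← h]; exact l.isLt
        rw [hadd1, Nat.mod_eq_of_lt hlt, h]
      · refine Or.inr (Or.inr (Fin.ext ?_))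
        have hlt : l.val + 1 < n := by rw [← h]; exact k.isLt
        rw [hadd1, Nat.mod_eq_of_lt hlt, h]
      · refine Or.inr (Or.inr (Fin.ext ?_))
        rw [hadd1, h.2, h.1]
        have h2 : n - 1 + 1 = n := by omega
        rw [h2, Nat.mod_self]
      · refine Or.inr (Or.inl (Fin.ext ?_))
        rw [hadd1, h.1, h.2]
        have h2 : n - 1 + 1 = n := by omega
        rw [h2, Nat.mod_self]
    have hback : ∀ k l : Fin n, l = k + 1 →
        (l.val = k.val + 1 ∨ (k.val = n-1 ∧ l.val = 0)) := by
      intro k l h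
      have hv : l.val = (k.val + 1) % n := by rw [h, hadd1]
      rcases Nat.lt_or_ge (k.val + 1) n with hh | hh
      · exact Or.inl (by rw [hv, Nat.mod_eq_of_lt hh])
      · refine Or.inr ⟨?_, ?_⟩
        · have := k.isLt; omega
        · have hk : k.val = n - 1 := by have := k.isLt; omega
          rw [hv, hk]
          have h2 : n - 1 + 1 = n := by omega
          rw [h2, Nat.mod_self]
    have hadjV' : ∀ k l : Fin n, A' k l ≠ 0 → k = l ∨ l.val = k.val + 1 ∨ k.val = l.val + 1 ∨
        (k.val = 0 ∧ l.val = n-1) ∨ (k.val = n-1 ∧ l.val = 0) := by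
      intro k l hA
      rw [hA'app] at hA
      rcases hgroup _ _ hA with h | h | h
      · exact Or.inl (by
          have := add_right_cancel h
          exact this)
      · have h2 : l = k + 1 := by
          have h3 : l + (p + 1) = (k + 1) + (p + 1) := by
            rw [h]; abel
          exact add_right_cancel h3
        rcases hback k l h2 with hh | hh
        · exact Or.inr (Or.inl hh)
        · exact Or.inr (Or.inr (Or.inr (Or.inr hh)))
      · have h2 : k = l + 1 := by
          have h3 : k + (p + 1) = (l + 1) + (p + 1) := by
            rw [h]; abel
          exact add_right_cancel h3
        rcases hback l k h2 with hh | hh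
        · exact Or.inr (Or.inr (Or.inl hh))
        · exact Or.inr (Or.inr (Or.inr (Or.inl ⟨hh.2, hh.1⟩)))
    have hcorner : 0 < A' ⟨n-1, by omega⟩ ⟨0, by omega⟩ := by
      have h1 : (⟨n-1, by omega⟩ : Fin n) + (p + 1) = p := by
        have hiN1 : (⟨n-1, by omega⟩ : Fin n) + 1 = 0 := by
          refine Fin.ext ?_
          rw [hadd1]
          simp only [Fin.val_mk]
          have h2 : n - 1 + 1 = n := by omega
          rw [h2, Nat.mod_self]
          rfl
        calc (⟨n-1, by omega⟩ : Fin n) + (p + 1) = ((⟨n-1, by omega⟩ : Fin n) + 1) + p := by abel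
          _ = 0 + p := by rw [hiN1]
          _ = p := zero_add p
      have h2 : (⟨0, by omega⟩ : Fin n) + (p + 1) = p + 1 := by
        have h3 : (⟨0, by omega⟩ : Fin n) = 0 := rfl
        rw [h3, zero_add]
      rw [hA'app, h1, h2]
      exact hp
    exact isSPN_of_submatrix σ
      (core2 hn A' (isSymm_submatrix hsym σ) (copositive_submatrix hcop σ) hadjV' hcorner)
  · push_neg at hpos
    refine ⟨A, 0, nonpos_offdiag_psd hsym hcop (fun i j hij => hpos i j hij), ?_, ?_, ?_⟩
    · unfold Matrix.IsSymm
      simp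
    · intro i j
      simp
    · rw [add_zero]



/-- For every `n ≥ 3`, the cycle `C_n` on `n` vertices is an SPN graph. -/
theorem isSPNGraph_cycleGraph (n : ℕ) (hn : 3 ≤ n) :
    IsSPNGraph (cycleGraph n) := by
  intro m A hsym hcop hiso
  obtain ⟨e⟩ := hiso
  have hm : m = n := by
    have h1 := Fintype.card_congr e.toEquiv
    simpa using h1
  subst hm
  set σ : Fin m ≃ Fin m := e.toEquiv with hσdef
  refine isSPN_of_submatrix σ.symm (core1 hn _ (isSymm_submatrix hsym _)
    (copositive_submatrix hcop σ.symm) ?_)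
  intro k l hA
  by_cases hkl : k = l
  · exact Or.inl hkl
  · have hAkl : A (σ.symm k) (σ.symm l) ≠ 0 := hA
    have hadj : (matrixGraph A).Adj (σ.symm k) (σ.symm l) :=
      ⟨fun h => hkl (by simpa using congrArg σ h), Or.inl hAkl⟩
    have hcyc : (cycleGraph m).Adj (σ (σ.symm k)) (σ (σ.symm l)) := by
      exact e.map_adj_iff.mpr hadj
    rw [Equiv.apply_symm_apply, Equiv.apply_symm_apply] at hcyc
    obtain ⟨hne, hor⟩ := hcyc
    rcases hor with h | h
    · rcases Nat.lt_or_ge (k.val + 1) m with hh | hh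
      · rw [Nat.mod_eq_of_lt hh] at h
        exact Or.inr (Or.inl h.symm)
      · have hk : k.val = m - 1 := by have := k.isLt; omega
        have h2 : k.val + 1 = m := by omega
        rw [h2, Nat.mod_self] at h
        exact Or.inr (Or.inr (Or.inr (Or.inr ⟨hk, h.symm⟩)))
    · rcases Nat.lt_or_ge (l.val + 1) m with hh | hh
      · rw [Nat.mod_eq_of_lt hh] at h
        exact Or.inr (Or.inr (Or.inl h.symm))
      · have hl : l.val = m - 1 := by have := l.isLt; omega
        have h2 : l.val + 1 = m := by omega
        rw [h2, Nat.mod_self] at h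
        exact Or.inr (Or.inr (Or.inr (Or.inl ⟨h.symm, hl⟩)))
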